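/- arXiv:1809.03309 — 3 statements merged into one kernel-verified Lean document; each statement's English description precedes it below -/
import Mathlib

section
/- For every decoding order π, the polyhedral TIN region P_π(𝒦) equals the set of all tuples d ∈ ℝ_{≥0}^𝒦 that satisfy the TIN cyclic system for π. That is, d ∈ ℝ_{≥0}^𝒦 admits a power allocation r ≤ 0 realizing it (in the polyhedral TIN sense) if and only if (i) for every (l,i) ∈ 𝒦, Σ_{s=1}^{l} d_i^{[π_i(s)]} ≤ α_{ii}^{[π_i(l)]}, and (ii) for every m ∈ {2,…,K}, every sequence (i_1,…,i_m) of m distinct cells and every choice l_{i_j} ∈ {1,…,L_{i_j}}, Σ_{j=1}^{m} Σ_{s=1}^{l_{i_j}} d_{i_j}^{[π_{i_j}(s)]} ≤ Σ_{j=1}^{m} (α_{i_j i_j}^{[π_{i_j}(l_{i_j})]} − α_{i_j i_{j−1}}^{[π_{i_j}(l_{i_j})]}) with i_0 = i_m. -/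
open Finset

/-- The set of users `𝒦`: a cell `k : Fin K` together with a user index in `Fin (L k)`. -/
abbrev User {K : ℕ} (L : Fin K → ℕ) := (k : Fin K) × Fin (L k)

/-- The cyclically previous index in `Fin m` (i.e. `j - 1` modulo `m`). -/
def prevIdx {m : ℕ} (j : Fin m) : Fin m :=
  ⟨(j.val + (m - 1)) % m, Nat.mod_lt _ j.pos⟩

/-- The cyclically next index in `Fin m` (i.e. `j + 1` modulo `m`). -/
def nextIdx {m : ℕ} (j : Fin m) : Fin m :=
  ⟨(j.val + 1) % m, Nat.mod_lt _ j.pos⟩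

/-- The identity decoding order. -/
def idOrder {K : ℕ} (L : Fin K → ℕ) : (k : Fin K) → Equiv.Perm (Fin (L k)) :=
  fun _ => Equiv.refl _

/-- The term `max({0} ∪ {r_k^{[π_k(l')]} + α_{kk}^{[π_k(l')]} : l' < l, (π_k(l'),k) ∈ S}
∪ {r_j^{[l_j]} + α_{jk}^{[l_j]} : (l_j,j) ∈ S, j ≠ k})` in the polyhedral TIN constraints
(expressed as a supremum of the corresponding finite nonempty set of reals). -/
noncomputable def innerMax {K : ℕ} (L : Fin K → ℕ)
    (α : (k : Fin K) → Fin (L k) → Fin K → ℝ)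
    (π : (k : Fin K) → Equiv.Perm (Fin (L k)))
    (S : Set (User L)) (r : (k : Fin K) → Fin (L k) → ℝ)
    (k : Fin K) (l : Fin (L k)) : ℝ :=
  sSup (insert (0 : ℝ)
    ({x : ℝ | ∃ l' : Fin (L k), l' < l ∧ (⟨k, π k l'⟩ : User L) ∈ S ∧
        x = r k (π k l') + α k (π k l') k} ∪
     {x : ℝ | ∃ (j : Fin K) (lj : Fin (L j)), j ≠ k ∧ (⟨j, lj⟩ : User L) ∈ S ∧
        x = r j lj + α j lj k}))

/-- The polyhedral TIN region `P_π(S)`: `d` is nonnegative, vanishes outside `S`, and is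
realized by some power allocation `r ≤ 0` on `S`. -/
def polyTIN {K : ℕ} (L : Fin K → ℕ)
    (α : (k : Fin K) → Fin (L k) → Fin K → ℝ)
    (π : (k : Fin K) → Equiv.Perm (Fin (L k)))
    (S : Set (User L))
    (d : (k : Fin K) → Fin (L k) → ℝ) : Prop :=
  (∀ (k : Fin K) (l : Fin (L k)), 0 ≤ d k l) ∧
  (∀ (k : Fin K) (l : Fin (L k)), (⟨k, l⟩ : User L) ∉ S → d k l = 0) ∧
  ∃ r : (k : Fin K) → Fin (L k) → ℝ,
    (∀ (k : Fin K) (l : Fin (L k)), (⟨k, l⟩ : User L) ∈ S → r k l ≤ 0) ∧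
    (∀ (k : Fin K) (l : Fin (L k)), (⟨k, π k l⟩ : User L) ∈ S →
      d k (π k l) ≤ r k (π k l) + α k (π k l) k - innerMax L α π S r k l)

/-- The TIN-achievable region `P*_π` for decoding order `π`: as `P_π(𝒦)` but with the
positive part `max(0, ·)` of the upper bound. -/
def starTIN {K : ℕ} (L : Fin K → ℕ)
    (α : (k : Fin K) → Fin (L k) → Fin K → ℝ)
    (π : (k : Fin K) → Equiv.Perm (Fin (L k)))
    (d : (k : Fin K) → Fin (L k) → ℝ) : Prop :=
  (∀ (k : Fin K) (l : Fin (L k)), 0 ≤ d k l) ∧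
  ∃ r : (k : Fin K) → Fin (L k) → ℝ,
    (∀ (k : Fin K) (l : Fin (L k)), r k l ≤ 0) ∧
    (∀ (k : Fin K) (l : Fin (L k)),
      d k (π k l) ≤ max 0 (r k (π k l) + α k (π k l) k - innerMax L α π Set.univ r k l))

/-- The TIN cyclic system of GDoF inequalities for decoding order `π`:
(i) per-cell MAC-type bounds, and (ii) cyclic bounds over sequences of distinct cells. -/
def cyclicSystem {K : ℕ} (L : Fin K → ℕ)
    (α : (k : Fin K) → Fin (L k) → Fin K → ℝ)
    (π : (k : Fin K) → Equiv.Perm (Fin (L k)))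
    (d : (k : Fin K) → Fin (L k) → ℝ) : Prop :=
  (∀ (k : Fin K) (l : Fin (L k)),
      ∑ s ∈ Finset.Iic l, d k (π k s) ≤ α k (π k l) k) ∧
  (∀ m : ℕ, 2 ≤ m → m ≤ K → ∀ c : Fin m → Fin K, Function.Injective c →
    ∀ lsel : (j : Fin m) → Fin (L (c j)),
      ∑ j, (∑ s ∈ Finset.Iic (lsel j), d (c j) (π (c j) s)) ≤
      ∑ j, (α (c j) (π (c j) (lsel j)) (c j) -
            α (c j) (π (c j) (lsel j)) (c (prevIdx j))))

namespace TINaux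

lemma prevIdx_nextIdx {m : ℕ} (j : Fin m) : prevIdx (nextIdx j) = j := by
  rcases j with ⟨v, hv⟩
  simp only [prevIdx, nextIdx, Fin.ext_iff]
  rw [Nat.mod_add_mod]
  have h1 : v + 1 + (m - 1) = v + m := by omega
  rw [h1, Nat.add_mod_right, Nat.mod_eq_of_lt hv]

lemma nextIdx_prevIdx {m : ℕ} (j : Fin m) : nextIdx (prevIdx j) = j := by
  rcases j with ⟨v, hv⟩
  simp only [prevIdx, nextIdx, Fin.ext_iff]
  rw [Nat.mod_add_mod]
  have h1 : v + (m - 1) + 1 = v + m := by omega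
  rw [h1, Nat.add_mod_right, Nat.mod_eq_of_lt hv]

lemma nextIdx_ne {m : ℕ} (hm : 2 ≤ m) (j : Fin m) : nextIdx j ≠ j := by
  rcases j with ⟨v, hv⟩
  simp only [nextIdx, Fin.ext_iff, ne_eq]
  rcases Nat.lt_or_ge (v + 1) m with h | h
  · rw [Nat.mod_eq_of_lt h]; omega
  · have h2 : v + 1 = m := by omega
    rw [h2, Nat.mod_self]; omega

def nextEquiv (m : ℕ) : Equiv.Perm (Fin m) :=
  ⟨nextIdx, prevIdx, prevIdx_nextIdx, nextIdx_prevIdx⟩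

lemma prevIdx_zero {n : ℕ} : prevIdx (0 : Fin (n + 1)) = Fin.last n := by
  simp only [prevIdx, Fin.ext_iff, Fin.last]
  simp [Nat.mod_eq_of_lt (Nat.lt_succ_self n)]

lemma prevIdx_succ {n : ℕ} (i : Fin n) : prevIdx i.succ = i.castSucc := by
  simp only [prevIdx, Fin.ext_iff, Fin.val_succ, Fin.coe_castSucc]
  have h1 : i.val + 1 + (n + 1 - 1) = i.val + (n + 1) := by omega
  rw [h1, Nat.add_mod_right, Nat.mod_eq_of_lt (by omega : i.val < n + 1)]

variable {K : ℕ}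

noncomputable def pathF (Wg : Fin K → Fin K → ℝ) : List (Fin K) → ℝ
  | [] => 0
  | [_] => 0
  | a :: b :: t => Wg b a + pathF Wg (b :: t)

@[simp] lemma pathF_nil (Wg : Fin K → Fin K → ℝ) : pathF Wg [] = 0 := rfl
@[simp] lemma pathF_single (Wg : Fin K → Fin K → ℝ) (a : Fin K) : pathF Wg [a] = 0 := rfl
lemma pathF_cons_cons (Wg : Fin K → Fin K → ℝ) (a b : Fin K) (t : List (Fin K)) :
    pathF Wg (a :: b :: t) = Wg b a + pathF Wg (b :: t) := rfl

lemma pathF_append (Wg : Fin K → Fin K → ℝ) :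
    ∀ (u : List (Fin K)) (b : Fin K) (v : List (Fin K)),
      pathF Wg (u ++ b :: v) = pathF Wg (u ++ [b]) + pathF Wg (b :: v)
  | [], b, v => by cases v <;> simp [pathF_cons_cons]
  | [a], b, v => by simp [pathF_cons_cons]
  | a :: a' :: u, b, v => by
    have ih := pathF_append Wg (a' :: u) b v
    simp only [List.cons_append] at *
    rw [pathF_cons_cons, pathF_cons_cons, ih]
    ring

lemma pathF_cons_sum (Wg : Fin K → Fin K → ℝ) :
    ∀ (q : List (Fin K)) (a : Fin K),
      pathF Wg (a :: q) =
        ∑ i : Fin q.length, Wg ((a :: q).get i.succ) ((a :: q).get i.castSucc)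
  | [], a => by simp
  | b :: t, a => by
    have ih := pathF_cons_sum Wg t b
    rw [pathF_cons_cons, ih]
    show _ = ∑ i : Fin (t.length + 1), Wg ((a :: b :: t).get i.succ) ((a :: b :: t).get i.castSucc)
    rw [Fin.sum_univ_succ]
    rfl

lemma pathF_cycle (Wg : Fin K → Fin K → ℝ) (q : List (Fin K)) (hne : q ≠ []) :
    pathF Wg q + Wg (q.head hne) (q.getLast hne) =
      ∑ i : Fin q.length, Wg (q.get i) (q.get (prevIdx i)) := by
  obtain ⟨a, t, rfl⟩ := List.exists_cons_of_ne_nil hne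
  show _ = ∑ i : Fin (t.length + 1), Wg ((a :: t).get i) ((a :: t).get (prevIdx i))
  rw [Fin.sum_univ_succ]
  have h0 : (a :: t).get (0 : Fin (t.length + 1)) = a := rfl
  have hlast : (a :: t).get (prevIdx (0 : Fin (t.length + 1))) = (a :: t).getLast hne := by
    rw [prevIdx_zero]
    rw [List.getLast_eq_getElem]
    rfl
  have hhead : (a :: t).head hne = a := rfl
  rw [hhead, h0, hlast]
  rw [pathF_cons_sum]
  have : ∀ i : Fin t.length, (a :: t).get (prevIdx i.succ) = (a :: t).get i.castSucc := by
    intro i; rw [prevIdx_succ]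
  rw [add_comm]
  congr 1
  apply Finset.sum_congr rfl
  intro i _
  rw [this i]

end TINaux

namespace TINaux

variable {K : ℕ} {L : Fin K → ℕ}

noncomputable def DD (π : (k : Fin K) → Equiv.Perm (Fin (L k)))
    (d : (k : Fin K) → Fin (L k) → ℝ) (k : Fin K) (l : Fin (L k)) : ℝ :=
  ∑ s ∈ Finset.Iic l, d k (π k s)

noncomputable def WW (α : (k : Fin K) → Fin (L k) → Fin K → ℝ)
    (π : (k : Fin K) → Equiv.Perm (Fin (L k)))
    (d : (k : Fin K) → Fin (L k) → ℝ) (j k : Fin K) : ℝ :=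
  sSup (Set.range fun l' : Fin (L j) =>
    DD π d j l' - α j (π j l') j + α j (π j l') k)

variable {α : (k : Fin K) → Fin (L k) → Fin K → ℝ}
  {π : (k : Fin K) → Equiv.Perm (Fin (L k))}
  {d : (k : Fin K) → Fin (L k) → ℝ}

lemma le_WW (j k : Fin K) (l' : Fin (L j)) :
    DD π d j l' - α j (π j l') j + α j (π j l') k ≤ WW α π d j k :=
  le_csSup (Set.finite_range _).bddAbove (Set.mem_range_self _)

lemma WW_mem (j k : Fin K) (hL : 1 ≤ L j) :
    ∃ l' : Fin (L j), WW α π d j k = DD π d j l' - α j (π j l') j + α j (π j l') k := by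
  have hne : (Set.range fun l' : Fin (L j) =>
      DD π d j l' - α j (π j l') j + α j (π j l') k).Nonempty :=
    ⟨_, Set.mem_range_self (⟨0, hL⟩ : Fin (L j))⟩
  have := hne.csSup_mem (Set.finite_range _)
  obtain ⟨l', hl'⟩ := this
  exact ⟨l', hl'.symm⟩

/-- The cycle lemma: around any simple cycle the `WW`-weights sum to at most `0`. -/
lemma cycle_nonpos (hL : ∀ k, 1 ≤ L k)
    (hcyc : ∀ m : ℕ, 2 ≤ m → m ≤ K → ∀ c : Fin m → Fin K, Function.Injective c →
      ∀ lsel : (j : Fin m) → Fin (L (c j)),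
        ∑ j, (∑ s ∈ Finset.Iic (lsel j), d (c j) (π (c j) s)) ≤
        ∑ j, (α (c j) (π (c j) (lsel j)) (c j) -
              α (c j) (π (c j) (lsel j)) (c (prevIdx j))))
    (q : List (Fin K)) (hnd : q.Nodup) (h2 : 2 ≤ q.length) (hne : q ≠ []) :
    pathF (WW α π d) q + WW α π d (q.head hne) (q.getLast hne) ≤ 0 := by
  rw [pathF_cycle]
  have hinj : Function.Injective q.get := List.nodup_iff_injective_get.mp hnd
  have hmK : q.length ≤ K := by
    have := hnd.length_le_card
    simpa using this
  choose lsel hlsel using fun i : Fin q.length =>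
    WW_mem (q.get i) (q.get (prevIdx i)) (hL (q.get i)) (α := α) (π := π) (d := d)
  have key := hcyc q.length h2 hmK q.get hinj lsel
  calc ∑ i : Fin q.length, WW α π d (q.get i) (q.get (prevIdx i))
      = ∑ i : Fin q.length, (DD π d (q.get i) (lsel i)
          - α (q.get i) (π (q.get i) (lsel i)) (q.get i)
          + α (q.get i) (π (q.get i) (lsel i)) (q.get (prevIdx i))) :=
        Finset.sum_congr rfl fun i _ => hlsel i
    _ ≤ 0 := by
        have h1 : ∑ i : Fin q.length, DD π d (q.get i) (lsel i) ≤
            ∑ i : Fin q.length, (α (q.get i) (π (q.get i) (lsel i)) (q.get i) -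
              α (q.get i) (π (q.get i) (lsel i)) (q.get (prevIdx i))) := key
        rw [Finset.sum_sub_distrib] at h1
        rw [Finset.sum_add_distrib, Finset.sum_sub_distrib]
        linarith

end TINaux

namespace TINaux

variable {K : ℕ} {L : Fin K → ℕ}
  {α : (k : Fin K) → Fin (L k) → Fin K → ℝ}
  {π : (k : Fin K) → Equiv.Perm (Fin (L k))}
  {d : (k : Fin K) → Fin (L k) → ℝ}

noncomputable def CC (α : (k : Fin K) → Fin (L k) → Fin K → ℝ)
    (π : (k : Fin K) → Equiv.Perm (Fin (L k)))
    (d : (k : Fin K) → Fin (L k) → ℝ) (k : Fin K) : ℝ :=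
  sSup (insert (0 : ℝ)
    (pathF (WW α π d) '' {p : List (Fin K) | p.Nodup ∧ p.head? = some k}))

lemma CC_set_finite (k : Fin K) :
    (insert (0 : ℝ)
      (pathF (WW α π d) '' {p : List (Fin K) | p.Nodup ∧ p.head? = some k})).Finite := by
  apply Set.Finite.insert
  apply Set.Finite.image
  apply Set.Finite.subset (List.finite_length_le (Fin K) K)
  intro p hp
  have := hp.1.length_le_card
  simpa using this

lemma CC_nonneg (k : Fin K) : 0 ≤ CC α π d k :=
  le_csSup (CC_set_finite k).bddAbove (Set.mem_insert _ _)

lemma le_CC {p : List (Fin K)} {k : Fin K} (hnd : p.Nodup) (hh : p.head? = some k) :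
    pathF (WW α π d) p ≤ CC α π d k :=
  le_csSup (CC_set_finite k).bddAbove (Set.mem_insert_of_mem _ ⟨p, ⟨hnd, hh⟩, rfl⟩)

lemma CC_cases (k : Fin K) :
    CC α π d k = 0 ∨ ∃ p : List (Fin K), p.Nodup ∧ p.head? = some k ∧
      CC α π d k = pathF (WW α π d) p := by
  have hmem := (Set.insert_nonempty _ _).csSup_mem (CC_set_finite (α := α) (π := π) (d := d) k)
  rcases hmem with h | ⟨p, ⟨hnd, hh⟩, hp⟩
  · exact Or.inl h
  · exact Or.inr ⟨p, hnd, hh, hp.symm⟩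

section withCyc

variable (hL : ∀ k, 1 ≤ L k)
  (hcyc : ∀ m : ℕ, 2 ≤ m → m ≤ K → ∀ c : Fin m → Fin K, Function.Injective c →
      ∀ lsel : (j : Fin m) → Fin (L (c j)),
        ∑ j, (∑ s ∈ Finset.Iic (lsel j), d (c j) (π (c j) s)) ≤
        ∑ j, (α (c j) (π (c j) (lsel j)) (c j) -
              α (c j) (π (c j) (lsel j)) (c (prevIdx j))))

include hL hcyc

/-- Bellman-type inequality: `CC j + W(j,k) ≤ CC k` for `j ≠ k`. -/
lemma CC_ge (j k : Fin K) (hjk : j ≠ k) :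
    CC α π d j + WW α π d j k ≤ CC α π d k := by
  rcases CC_cases (α := α) (π := π) (d := d) j with h0 | ⟨p, hnd, hh, hp⟩
  · rw [h0, zero_add]
    have h1 : pathF (WW α π d) [k, j] = WW α π d j k := by
      rw [pathF_cons_cons, pathF_single, add_zero]
    calc WW α π d j k = pathF (WW α π d) [k, j] := h1.symm
      _ ≤ CC α π d k := le_CC (by simp [hjk.symm]) rfl
  · obtain ⟨a, t, rfl⟩ := List.exists_cons_of_ne_nil
      (show p ≠ [] by rintro rfl; simp at hh)
    simp only [List.head?_cons, Option.some_inj] at hh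
    subst hh
    by_cases hk : k ∈ a :: t
    · obtain ⟨u, v, huv⟩ := List.append_of_mem hk
      have hu_ne : u ≠ [] := by
        rintro rfl
        simp only [List.nil_append, List.cons.injEq] at huv
        exact hjk huv.1
      obtain ⟨b, u', rfl⟩ := List.exists_cons_of_ne_nil hu_ne
      have hba : b = a := by
        rw [List.cons_append] at huv
        injection huv with h1 _
        exact h1.symm
      subst hba
      rw [hp, huv, pathF_append]
      have hnd' : ((b :: u') ++ k :: v).Nodup := huv ▸ hnd
      have hndq : ((b :: u') ++ [k]).Nodup :=
        hnd'.sublist (List.Sublist.append (List.Sublist.refl _)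
          (List.cons_sublist_cons.mpr (List.nil_sublist v)))
      have hne' : (b :: u') ++ [k] ≠ [] := by simp
      have hlen : 2 ≤ ((b :: u') ++ [k]).length := by
        rw [List.length_append, List.length_cons]; simp
      have hhead : ((b :: u') ++ [k]).head hne' = b := rfl
      have hlast : ((b :: u') ++ [k]).getLast hne' = k := List.getLast_append hne'
      have hcycle := cycle_nonpos hL hcyc ((b :: u') ++ [k]) hndq hlen hne'
      rw [hhead, hlast] at hcycle
      have hkv : pathF (WW α π d) (k :: v) ≤ CC α π d k :=
        le_CC (hnd'.sublist (List.sublist_append_right (b :: u') (k :: v))) rfl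
      linarith
    · have h2 : (k :: a :: t).Nodup := by rw [List.nodup_cons]; exact ⟨hk, hnd⟩
      have : CC α π d a + WW α π d a k = pathF (WW α π d) (k :: a :: t) := by
        rw [pathF_cons_cons, hp]; ring
      rw [this]
      exact le_CC h2 rfl

/-- Upper bound: `CC k + D_k(l) ≤ α_kk^{π_k(l)}`. -/
lemma CC_le (hα : ∀ (k : Fin K) (l : Fin (L k)) (i : Fin K), 0 ≤ α k l i)
    (hmac : ∀ (k : Fin K) (l : Fin (L k)), ∑ s ∈ Finset.Iic l, d k (π k s) ≤ α k (π k l) k)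
    (k : Fin K) (l : Fin (L k)) :
    CC α π d k + DD π d k l ≤ α k (π k l) k := by
  have hmac' : DD π d k l ≤ α k (π k l) k := hmac k l
  rcases CC_cases (α := α) (π := π) (d := d) k with h0 | ⟨p, hnd, hh, hp⟩
  · rw [h0, zero_add]; exact hmac'
  · obtain ⟨a, t, rfl⟩ := List.exists_cons_of_ne_nil
      (show p ≠ [] by rintro rfl; simp at hh)
    simp only [List.head?_cons, Option.some_inj] at hh
    subst hh
    cases t with
    | nil => rw [hp, pathF_single, zero_add]; exact hmac'
    | cons b t' =>
      have hne' : a :: b :: t' ≠ [] := by simp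
      have hlen : 2 ≤ (a :: b :: t').length := by simp
      have hhead : (a :: b :: t').head hne' = a := rfl
      have hcycle := cycle_nonpos hL hcyc (a :: b :: t') hnd hlen hne'
      rw [hhead] at hcycle
      set j' := (a :: b :: t').getLast hne' with hj'
      have hW : DD π d a l - α a (π a l) a ≤ WW α π d a j' := by
        have h1 := le_WW (α := α) (π := π) (d := d) a j' l
        have hα' : 0 ≤ α a (π a l) j' := hα a (π a l) j'
        linarith
      rw [hp]
      linarith

end withCyc

end TINaux

namespace TINaux

section InnerMax

variable {K : ℕ} {L : Fin K → ℕ}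
  {α : (k : Fin K) → Fin (L k) → Fin K → ℝ}
  {π : (k : Fin K) → Equiv.Perm (Fin (L k))}
  {r : (k : Fin K) → Fin (L k) → ℝ}

lemma innerMax_set_finite (S : Set (User L)) (k : Fin K) (l : Fin (L k)) :
    (insert (0 : ℝ)
      ({x : ℝ | ∃ l' : Fin (L k), l' < l ∧ (⟨k, π k l'⟩ : User L) ∈ S ∧
          x = r k (π k l') + α k (π k l') k} ∪
       {x : ℝ | ∃ (j : Fin K) (lj : Fin (L j)), j ≠ k ∧ (⟨j, lj⟩ : User L) ∈ S ∧
          x = r j lj + α j lj k})).Finite := by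
  apply Set.Finite.insert
  apply Set.Finite.union
  · apply Set.Finite.subset
      (Set.finite_range (fun l' : Fin (L k) => r k (π k l') + α k (π k l') k))
    rintro x ⟨l', _, _, rfl⟩
    exact ⟨l', rfl⟩
  · apply Set.Finite.subset
      (Set.finite_range (fun p : User L => r p.1 p.2 + α p.1 p.2 k))
    rintro x ⟨j, lj, _, _, rfl⟩
    exact ⟨⟨j, lj⟩, rfl⟩

lemma innerMax_nonneg (S : Set (User L)) (k : Fin K) (l : Fin (L k)) :
    0 ≤ innerMax L α π S r k l :=
  le_csSup (innerMax_set_finite S k l).bddAbove (Set.mem_insert _ _)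

lemma le_innerMax_cell {S : Set (User L)} {k : Fin K} {l : Fin (L k)} (l' : Fin (L k))
    (h : l' < l) (hS : (⟨k, π k l'⟩ : User L) ∈ S) :
    r k (π k l') + α k (π k l') k ≤ innerMax L α π S r k l :=
  le_csSup (innerMax_set_finite S k l).bddAbove
    (Set.mem_insert_of_mem _ (Or.inl ⟨l', h, hS, rfl⟩))

lemma le_innerMax_cross {S : Set (User L)} {k : Fin K} {l : Fin (L k)}
    (j : Fin K) (lj : Fin (L j)) (h : j ≠ k) (hS : (⟨j, lj⟩ : User L) ∈ S) :
    r j lj + α j lj k ≤ innerMax L α π S r k l :=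
  le_csSup (innerMax_set_finite S k l).bddAbove
    (Set.mem_insert_of_mem _ (Or.inr ⟨j, lj, h, hS, rfl⟩))

lemma innerMax_le {S : Set (User L)} {k : Fin K} {l : Fin (L k)} {T : ℝ} (h0 : 0 ≤ T)
    (hcell : ∀ l' : Fin (L k), l' < l → r k (π k l') + α k (π k l') k ≤ T)
    (hcross : ∀ (j : Fin K) (lj : Fin (L j)), j ≠ k → r j lj + α j lj k ≤ T) :
    innerMax L α π S r k l ≤ T := by
  apply csSup_le (Set.insert_nonempty _ _)
  intro x hx
  rcases Set.mem_insert_iff.mp hx with rfl | hx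
  · exact h0
  · rcases hx with ⟨l', h1, _, rfl⟩ | ⟨j, lj, h1, _, rfl⟩
    · exact hcell l' h1
    · exact hcross j lj h1

end InnerMax

section Main

variable {K : ℕ} {L : Fin K → ℕ}
  {α : (k : Fin K) → Fin (L k) → Fin K → ℝ}
  {π : (k : Fin K) → Equiv.Perm (Fin (L k))}
  {d : (k : Fin K) → Fin (L k) → ℝ}

lemma Iio_eq_Iic_pred {n : ℕ} (l : Fin n) (m : ℕ) (hm : l.val = m + 1) (hm' : m < n) :
    Finset.Iio l = Finset.Iic (⟨m, hm'⟩ : Fin n) := by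
  ext s
  simp only [Finset.mem_Iio, Finset.mem_Iic, Fin.lt_def, Fin.le_def, hm]
  omega

/-- Per-cell telescoping bound in the forward direction. -/
lemma cell_bound
    (hd0 : ∀ (k : Fin K) (l : Fin (L k)), 0 ≤ d k l)
    (r : (k : Fin K) → Fin (L k) → ℝ)
    (hmain : ∀ (k : Fin K) (l : Fin (L k)),
      d k (π k l) ≤ r k (π k l) + α k (π k l) k - innerMax L α π Set.univ r k l)
    (k : Fin K) (t : ℝ)
    (ht : t = 0 ∨ ∃ (j : Fin K) (lj : Fin (L j)), j ≠ k ∧ t = r j lj + α j lj k) :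
    ∀ (n : ℕ) (l : Fin (L k)), l.val = n →
      (∑ s ∈ Finset.Iic l, d k (π k s)) ≤ r k (π k l) + α k (π k l) k - t := by
  intro n
  induction n using Nat.strong_induction_on with
  | _ n ih =>
    intro l hl
    have hsplit : ∑ s ∈ Finset.Iic l, d k (π k s)
        = d k (π k l) + ∑ s ∈ Finset.Iio l, d k (π k s) := by
      rw [← Finset.Iio_insert, Finset.sum_insert (by simp)]
    have hmain' := hmain k l
    have htle : t ≤ innerMax L α π Set.univ r k l := by
      rcases ht with rfl | ⟨j, lj, hjk, rfl⟩
      · exact innerMax_nonneg _ _ _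
      · exact le_innerMax_cross j lj hjk trivial
    rcases Nat.eq_zero_or_pos n with h0 | hpos
    · have hIio : Finset.Iio l = ∅ := by
        ext s
        simp only [Finset.mem_Iio, Fin.lt_def, Finset.notMem_empty, iff_false, not_lt, hl, h0]
        omega
      rw [hsplit, hIio, Finset.sum_empty, add_zero]
      linarith
    · have hm' : n - 1 < L k := by omega
      set l' : Fin (L k) := ⟨n - 1, hm'⟩ with hl'
      have hIio : Finset.Iio l = Finset.Iic l' :=
        Iio_eq_Iic_pred l (n - 1) (by omega) hm'
      have hlt : l' < l := by
        simp only [Fin.lt_def, hl, hl']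
        omega
      have ih' := ih (n - 1) (by omega) l' rfl
      have hcell := le_innerMax_cell (α := α) (π := π) (r := r)
        (S := Set.univ) (l := l) l' hlt trivial
      rw [hsplit, hIio]
      linarith

/-- Forward direction. -/
lemma forward (hL : ∀ k, 1 ≤ L k)
    (hd : polyTIN L α π Set.univ d) :
    (∀ (k : Fin K) (l : Fin (L k)), 0 ≤ d k l) ∧ cyclicSystem L α π d := by
  obtain ⟨hd0, -, r, hr0, hmain⟩ := hd
  have hmain' : ∀ (k : Fin K) (l : Fin (L k)),
      d k (π k l) ≤ r k (π k l) + α k (π k l) k - innerMax L α π Set.univ r k l :=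
    fun k l => hmain k l trivial
  have hr0' : ∀ (k : Fin K) (l : Fin (L k)), r k l ≤ 0 := fun k l => hr0 k l trivial
  refine ⟨hd0, ?_, ?_⟩
  · -- MAC bounds
    intro k l
    have h := cell_bound hd0 r hmain' k 0 (Or.inl rfl) l.val l rfl
    have := hr0' k (π k l)
    linarith
  · -- cyclic bounds
    intro m hm2 hmK c hc lsel
    have hstep : ∀ j : Fin m,
        (∑ s ∈ Finset.Iic (lsel j), d (c j) (π (c j) s)) ≤
          r (c j) (π (c j) (lsel j)) + α (c j) (π (c j) (lsel j)) (c j)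
          - (r (c (nextIdx j)) (π (c (nextIdx j)) (lsel (nextIdx j)))
             + α (c (nextIdx j)) (π (c (nextIdx j)) (lsel (nextIdx j))) (c j)) := by
      intro j
      apply cell_bound hd0 r hmain' (c j) _ _ (lsel j).val (lsel j) rfl
      exact Or.inr ⟨c (nextIdx j), π (c (nextIdx j)) (lsel (nextIdx j)),
        fun h => nextIdx_ne hm2 j (hc h), rfl⟩
    have hsum := Finset.sum_le_sum (fun j (_ : j ∈ Finset.univ) => hstep j)
    -- cancel the r-terms using the bijection nextIdx
    have hre : ∑ j : Fin m, r (c (nextIdx j)) (π (c (nextIdx j)) (lsel (nextIdx j)))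
        = ∑ j : Fin m, r (c j) (π (c j) (lsel j)) :=
      Equiv.sum_comp (nextEquiv m) (fun j => r (c j) (π (c j) (lsel j)))
    have hαe : ∑ j : Fin m, α (c (nextIdx j)) (π (c (nextIdx j)) (lsel (nextIdx j))) (c j)
        = ∑ j : Fin m, α (c j) (π (c j) (lsel j)) (c (prevIdx j)) := by
      have := Equiv.sum_comp (nextEquiv m)
        (fun j => α (c j) (π (c j) (lsel j)) (c (prevIdx j)))
      calc ∑ j : Fin m, α (c (nextIdx j)) (π (c (nextIdx j)) (lsel (nextIdx j))) (c j)
          = ∑ j : Fin m, α (c (nextEquiv m j)) (π (c (nextEquiv m j))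
              (lsel (nextEquiv m j))) (c (prevIdx (nextEquiv m j))) := by
            apply Finset.sum_congr rfl
            intro j _
            have h1 : prevIdx (nextEquiv m j) = j := prevIdx_nextIdx j
            rw [h1]
            rfl
        _ = ∑ j : Fin m, α (c j) (π (c j) (lsel j)) (c (prevIdx j)) := this
    calc ∑ j : Fin m, ∑ s ∈ Finset.Iic (lsel j), d (c j) (π (c j) s)
        ≤ ∑ j : Fin m, (r (c j) (π (c j) (lsel j)) + α (c j) (π (c j) (lsel j)) (c j)
          - (r (c (nextIdx j)) (π (c (nextIdx j)) (lsel (nextIdx j)))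
             + α (c (nextIdx j)) (π (c (nextIdx j)) (lsel (nextIdx j))) (c j))) := hsum
      _ = ∑ j : Fin m, (α (c j) (π (c j) (lsel j)) (c j)
            - α (c j) (π (c j) (lsel j)) (c (prevIdx j))) := by
          simp only [Finset.sum_sub_distrib, Finset.sum_add_distrib, hre, hαe]
          ring

/-- Backward direction. -/
lemma backward (hL : ∀ k, 1 ≤ L k)
    (hα : ∀ (k : Fin K) (l : Fin (L k)) (i : Fin K), 0 ≤ α k l i)
    (hd0 : ∀ (k : Fin K) (l : Fin (L k)), 0 ≤ d k l)
    (hcs : cyclicSystem L α π d) :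
    polyTIN L α π Set.univ d := by
  obtain ⟨hmac, hcyc⟩ := hcs
  refine ⟨hd0, fun k l h => absurd trivial h, ?_⟩
  set r : (k : Fin K) → Fin (L k) → ℝ := fun k lj =>
    CC α π d k + DD π d k ((π k).symm lj) - α k lj k with hr
  have hrπ : ∀ (k : Fin K) (l : Fin (L k)),
      r k (π k l) = CC α π d k + DD π d k l - α k (π k l) k := by
    intro k l
    simp only [hr, Equiv.symm_apply_apply]
  refine ⟨r, ?_, ?_⟩
  · intro k lj _
    have h := CC_le hL hcyc hα hmac k ((π k).symm lj)
    simp only [hr]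
    have h2 : α k (π k ((π k).symm lj)) k = α k lj k := by rw [Equiv.apply_symm_apply]
    linarith [h2 ▸ h]
  · intro k l _
    rw [hrπ k l]
    have hDsplit : DD π d k l = d k (π k l) + ∑ s ∈ Finset.Iio l, d k (π k s) := by
      rw [DD, ← Finset.Iio_insert, Finset.sum_insert (by simp)]
    have hIio_nonneg : 0 ≤ ∑ s ∈ Finset.Iio l, d k (π k s) :=
      Finset.sum_nonneg fun s _ => hd0 k (π k s)
    have hT : innerMax L α π Set.univ r k l
        ≤ CC α π d k + ∑ s ∈ Finset.Iio l, d k (π k s) := by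
      apply innerMax_le
      · have := CC_nonneg (α := α) (π := π) (d := d) k
        linarith
      · intro l' hl'
        rw [hrπ k l']
        have hsub : Finset.Iic l' ⊆ Finset.Iio l := by
          intro s hs
          simp only [Finset.mem_Iic] at hs
          simp only [Finset.mem_Iio]
          exact lt_of_le_of_lt hs hl'
        have : DD π d k l' ≤ ∑ s ∈ Finset.Iio l, d k (π k s) :=
          Finset.sum_le_sum_of_subset_of_nonneg hsub fun s _ _ => hd0 k (π k s)
        linarith
      · intro j lj hjk
        have h1 : r j lj + α j lj k
            = CC α π d j + (DD π d j ((π j).symm lj) - α j (π j ((π j).symm lj)) j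
              + α j (π j ((π j).symm lj)) k) := by
          simp only [hr, Equiv.apply_symm_apply]
          ring
        have h2 := le_WW (α := α) (π := π) (d := d) j k ((π j).symm lj)
        have h3 := CC_ge hL hcyc j k hjk
        have h4 := hIio_nonneg
        rw [h1]
        linarith
    rw [hDsplit]
    linarith

end Main

end TINaux

/-- **Theorem 1 (polyhedral TIN region characterization).**
For every decoding order `π`, a nonnegative GDoF tuple `d` admits a power allocation
`r ≤ 0` realizing it in the polyhedral TIN sense (i.e. `d ∈ P_π(𝒦)`) if and only if `d`
satisfies the TIN cyclic system of inequalities for `π`. -/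
theorem polyTIN_iff_cyclicSystem {K : ℕ} (hK : 1 ≤ K)
    (L : Fin K → ℕ) (hL : ∀ k, 1 ≤ L k)
    (α : (k : Fin K) → Fin (L k) → Fin K → ℝ)
    (hα : ∀ (k : Fin K) (l : Fin (L k)) (i : Fin K), 0 ≤ α k l i)
    (hmono : ∀ k : Fin K, Monotone (fun l : Fin (L k) => α k l k))
    (π : (k : Fin K) → Equiv.Perm (Fin (L k)))
    (d : (k : Fin K) → Fin (L k) → ℝ) :
    polyTIN L α π Set.univ d ↔
      ((∀ (k : Fin K) (l : Fin (L k)), 0 ≤ d k l) ∧ cyclicSystem L α π d) := by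
  constructor
  · exact TINaux.forward hL
  · rintro ⟨hd0, hcs⟩
    exact TINaux.backward hL hα hd0 hcs
end

section
/- The general TIN-achievable GDoF region equals the union of all polyhedral TIN regions over all decoding orders and all subnetworks: P* = ∪_{π} ∪_{S ⊆ 𝒦} P_π(S), where the unions run over all decoding orders π and all subsets S of 𝒦. -/
open Finset

section Aux

variable {K : ℕ} {L : Fin K → ℕ}
  (α : (k : Fin K) → Fin (L k) → Fin K → ℝ)
  (π : (k : Fin K) → Equiv.Perm (Fin (L k)))

/-- The set appearing inside `innerMax`. -/
def imSet (S : Set (User L)) (r : (k : Fin K) → Fin (L k) → ℝ)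
    (k : Fin K) (l : Fin (L k)) : Set ℝ :=
  insert (0 : ℝ)
    ({x : ℝ | ∃ l' : Fin (L k), l' < l ∧ (⟨k, π k l'⟩ : User L) ∈ S ∧
        x = r k (π k l') + α k (π k l') k} ∪
     {x : ℝ | ∃ (j : Fin K) (lj : Fin (L j)), j ≠ k ∧ (⟨j, lj⟩ : User L) ∈ S ∧
        x = r j lj + α j lj k})

lemma innerMax_eq (S : Set (User L)) (r : (k : Fin K) → Fin (L k) → ℝ)
    (k : Fin K) (l : Fin (L k)) :
    innerMax L α π S r k l = sSup (imSet α π S r k l) := rfl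

lemma imSet_finite (S : Set (User L)) (r : (k : Fin K) → Fin (L k) → ℝ)
    (k : Fin K) (l : Fin (L k)) : (imSet α π S r k l).Finite := by
  apply Set.Finite.insert
  apply Set.Finite.union
  · apply Set.Finite.subset
      (Set.finite_range (fun l' : Fin (L k) => r k (π k l') + α k (π k l') k))
    rintro x ⟨l', _, _, rfl⟩; exact ⟨l', rfl⟩
  · apply Set.Finite.subset
      (Set.finite_range (fun u : User L => r u.1 u.2 + α u.1 u.2 k))
    rintro x ⟨j, lj, _, _, rfl⟩; exact ⟨⟨j, lj⟩, rfl⟩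

lemma imSet_bddAbove (S : Set (User L)) (r : (k : Fin K) → Fin (L k) → ℝ)
    (k : Fin K) (l : Fin (L k)) : BddAbove (imSet α π S r k l) :=
  (imSet_finite α π S r k l).bddAbove

lemma innerMax_nonneg (S : Set (User L)) (r : (k : Fin K) → Fin (L k) → ℝ)
    (k : Fin K) (l : Fin (L k)) : 0 ≤ innerMax L α π S r k l :=
  le_csSup (imSet_bddAbove α π S r k l) (Set.mem_insert _ _)

lemma innerMax_mono (S T : Set (User L)) (hST : S ⊆ T)
    (r : (k : Fin K) → Fin (L k) → ℝ) (k : Fin K) (l : Fin (L k)) :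
    innerMax L α π S r k l ≤ innerMax L α π T r k l := by
  apply csSup_le_csSup (imSet_bddAbove α π T r k l) ⟨0, Set.mem_insert _ _⟩
  rintro x (rfl | (⟨l', hl', hmem, rfl⟩ | ⟨j, lj, hj, hmem, rfl⟩))
  · exact Set.mem_insert _ _
  · exact Set.mem_insert_of_mem _ (Or.inl ⟨l', hl', hST hmem, rfl⟩)
  · exact Set.mem_insert_of_mem _ (Or.inr ⟨j, lj, hj, hST hmem, rfl⟩)

/-- Key lemma for the hard direction: extending a power allocation from `S` to all of `𝒦`
by sufficiently negative powers does not increase the interference term. -/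
lemma innerMax_univ_le (S : Set (User L)) (r r' : (k : Fin K) → Fin (L k) → ℝ)
    (k : Fin K) (l : Fin (L k))
    (hagree : ∀ (j : Fin K) (lj : Fin (L j)), (⟨j, lj⟩ : User L) ∈ S → r' j lj = r j lj)
    (hneg : ∀ (j : Fin K) (lj : Fin (L j)), (⟨j, lj⟩ : User L) ∉ S →
        r' j lj + α j lj k ≤ 0) :
    innerMax L α π Set.univ r' k l ≤ innerMax L α π S r k l := by
  rw [innerMax_eq, innerMax_eq]
  apply csSup_le ⟨0, Set.mem_insert _ _⟩
  have hnn : (0 : ℝ) ≤ sSup (imSet α π S r k l) := innerMax_nonneg α π S r k l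
  rintro x (rfl | (⟨l', hl', -, rfl⟩ | ⟨j, lj, hj, -, rfl⟩))
  · exact hnn
  · by_cases h : (⟨k, π k l'⟩ : User L) ∈ S
    · rw [hagree _ _ h]
      exact le_csSup (imSet_bddAbove α π S r k l)
        (Set.mem_insert_of_mem _ (Or.inl ⟨l', hl', h, rfl⟩))
    · exact (hneg _ _ h).trans hnn
  · by_cases h : (⟨j, lj⟩ : User L) ∈ S
    · rw [hagree _ _ h]
      exact le_csSup (imSet_bddAbove α π S r k l)
        (Set.mem_insert_of_mem _ (Or.inr ⟨j, lj, hj, h, rfl⟩))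
    · exact (hneg _ _ h).trans hnn

end Aux

/-- **Theorem 2 (general TIN-achievable GDoF region).**
The general TIN-achievable GDoF region `P* = ∪_π P*_π` equals the union, over all decoding
orders `π` and all subnetworks `S ⊆ 𝒦`, of the polyhedral TIN regions `P_π(S)`. -/
theorem starTIN_eq_union_polyTIN {K : ℕ} (hK : 1 ≤ K)
    (L : Fin K → ℕ) (hL : ∀ k, 1 ≤ L k)
    (α : (k : Fin K) → Fin (L k) → Fin K → ℝ)
    (hα : ∀ (k : Fin K) (l : Fin (L k)) (i : Fin K), 0 ≤ α k l i)
    (hmono : ∀ k : Fin K, Monotone (fun l : Fin (L k) => α k l k)) :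
    {d : (k : Fin K) → Fin (L k) → ℝ |
        ∃ π : (k : Fin K) → Equiv.Perm (Fin (L k)), starTIN L α π d} =
    {d : (k : Fin K) → Fin (L k) → ℝ |
        ∃ (π : (k : Fin K) → Equiv.Perm (Fin (L k))) (S : Set (User L)),
          polyTIN L α π S d} := by
  classical
  ext d
  simp only [Set.mem_setOf_eq]
  constructor
  · -- `P*_π ⊆ P_π(S)` with `S` the support of `d`.
    rintro ⟨π, hnn, r, hr, hd⟩
    refine ⟨π, {u : User L | 0 < d u.1 u.2}, hnn, ?_, r, fun k l _ => hr k l, ?_⟩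
    · intro k l hl
      exact le_antisymm (not_lt.1 hl) (hnn k l)
    · intro k l hmem
      have hpos : 0 < d k (π k l) := hmem
      have h1 : d k (π k l) ≤
          max 0 (r k (π k l) + α k (π k l) k -
            innerMax L α π {u : User L | 0 < d u.1 u.2} r k l) := by
        refine (hd k l).trans (max_le_max le_rfl ?_)
        have := innerMax_mono α π {u : User L | 0 < d u.1 u.2} Set.univ
          (Set.subset_univ _) r k l
        linarith
      rcases le_or_gt (r k (π k l) + α k (π k l) k -
          innerMax L α π {u : User L | 0 < d u.1 u.2} r k l) 0 with h | h
      · rw [max_eq_left h] at h1; linarith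
      · rwa [max_eq_right h.le] at h1
  · -- `P_π(S) ⊆ P*_π`, extending the power allocation by very negative powers off `S`.
    rintro ⟨π, S, hnn, hzero, r, hr, hd⟩
    -- a bound on all channel strengths
    have hne : Nonempty (User L × Fin K) :=
      ⟨⟨⟨⟨0, hK⟩, ⟨0, hL _⟩⟩, ⟨0, hK⟩⟩⟩
    set M : ℝ := sSup (Set.range (fun p : User L × Fin K => α p.1.1 p.1.2 p.2)) with hM
    have hMb : ∀ (j : Fin K) (lj : Fin (L j)) (i : Fin K), α j lj i ≤ M := by
      intro j lj i
      exact le_csSup (Set.finite_range _).bddAbove ⟨⟨⟨j, lj⟩, i⟩, rfl⟩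
    have hM0 : 0 ≤ M := le_trans (hα _ _ _) (hMb ⟨0, hK⟩ ⟨0, hL _⟩ ⟨0, hK⟩)
    set r' : (k : Fin K) → Fin (L k) → ℝ :=
      fun j lj => if (⟨j, lj⟩ : User L) ∈ S then r j lj else -(M + 1) with hr'
    have hagree : ∀ (j : Fin K) (lj : Fin (L j)), (⟨j, lj⟩ : User L) ∈ S →
        r' j lj = r j lj := fun j lj h => if_pos h
    refine ⟨π, hnn, r', ?_, ?_⟩
    · intro j lj
      by_cases h : (⟨j, lj⟩ : User L) ∈ S
      · rw [hagree _ _ h]; exact hr _ _ h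
      · simp only [hr', if_neg h]; linarith
    · intro k l
      by_cases hmem : (⟨k, π k l⟩ : User L) ∈ S
      · have hkey : innerMax L α π Set.univ r' k l ≤ innerMax L α π S r k l := by
          apply innerMax_univ_le α π S r r' k l hagree
          intro j lj h
          simp only [hr', if_neg h]
          have := hMb j lj k
          linarith
        calc d k (π k l) ≤ r k (π k l) + α k (π k l) k - innerMax L α π S r k l :=
              hd k l hmem
          _ ≤ r' k (π k l) + α k (π k l) k - innerMax L α π Set.univ r' k l := by
              rw [hagree _ _ hmem]; linarith
          _ ≤ max 0 _ := le_max_right _ _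
      · rw [hzero k (π k l) hmem]
        exact le_max_left _ _
end

section
/- Suppose the TIN-optimality conditions (O1) and (O2) hold. Then the general TIN-achievable GDoF region equals the polyhedron achieved with the identity decoding order: P* = P_id(𝒦), the set of all d ∈ ℝ_{≥0}^𝒦 satisfying the TIN cyclic system for the identity decoding order. (This is the achievable-region identity asserted in Theorem 4 of the paper, whose full statement additionally identifies this region with the optimal GDoF region of the Gaussian IMAC.) -/
open Finset

/-! ### Auxiliary lemmas -/

section FinIdx

lemma prevIdx_val {m : ℕ} (j : Fin m) :
    (prevIdx j).val = if j.val = 0 then m - 1 else j.val - 1 := by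
  have hm : 0 < m := j.pos
  have hj := j.isLt
  simp only [prevIdx]
  split_ifs with h
  · rw [h, Nat.zero_add]
    apply Nat.mod_eq_of_lt; omega
  · have : j.val + (m - 1) = (j.val - 1) + m := by omega
    rw [this, Nat.add_mod_right]
    apply Nat.mod_eq_of_lt; omega

lemma nextIdx_val {m : ℕ} (j : Fin m) :
    (nextIdx j).val = if j.val = m - 1 then 0 else j.val + 1 := by
  have hm : 0 < m := j.pos
  have hj := j.isLt
  simp only [nextIdx]
  split_ifs with h
  · have : j.val + 1 = m := by omega
    rw [this, Nat.mod_self]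
  · apply Nat.mod_eq_of_lt; omega

lemma nextIdx_prevIdx {m : ℕ} (j : Fin m) : nextIdx (prevIdx j) = j := by
  have hm : 0 < m := j.pos
  have hj := j.isLt
  apply Fin.ext
  rw [nextIdx_val, prevIdx_val]
  have h2 := prevIdx_val j
  split_ifs <;> omega

lemma nextIdx_surjective {m : ℕ} : Function.Surjective (nextIdx (m := m)) :=
  fun j => ⟨prevIdx j, nextIdx_prevIdx j⟩

lemma nextIdx_injective {m : ℕ} : Function.Injective (nextIdx (m := m)) :=
  Finite.injective_iff_surjective.mpr nextIdx_surjective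

lemma prevIdx_nextIdx {m : ℕ} (j : Fin m) : prevIdx (nextIdx j) = j :=
  nextIdx_injective (by rw [nextIdx_prevIdx])

lemma prevIdx_injective {m : ℕ} : Function.Injective (prevIdx (m := m)) :=
  Function.LeftInverse.injective nextIdx_prevIdx

lemma nextIdx_ne {m : ℕ} (hm : 2 ≤ m) (j : Fin m) : nextIdx j ≠ j := by
  intro h
  have := congrArg Fin.val h
  rw [nextIdx_val] at this
  have hj := j.isLt
  split_ifs at this <;> omega

lemma prevIdx_ne {m : ℕ} (hm : 2 ≤ m) (j : Fin m) : prevIdx j ≠ j := by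
  intro h
  have := congrArg Fin.val h
  rw [prevIdx_val] at this
  have hj := j.isLt
  split_ifs at this <;> omega

lemma rev_prevIdx {m : ℕ} (j : Fin m) : (prevIdx j).rev = nextIdx j.rev := by
  have hm : 0 < m := j.pos
  have hj := j.isLt
  apply Fin.ext
  rw [Fin.val_rev, nextIdx_val, prevIdx_val, Fin.val_rev]
  split_ifs <;> omega

end FinIdx

section IM
variable {K : ℕ} {L : Fin K → ℕ} {α : (k : Fin K) → Fin (L k) → Fin K → ℝ}
  {π : (k : Fin K) → Equiv.Perm (Fin (L k))}
  {r : (k : Fin K) → Fin (L k) → ℝ} {k : Fin K} {l : Fin (L k)}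

lemma IM_bddAbove {S : Set (User L)} : BddAbove (insert (0 : ℝ)
    ({x : ℝ | ∃ l' : Fin (L k), l' < l ∧ (⟨k, π k l'⟩ : User L) ∈ S ∧
        x = r k (π k l') + α k (π k l') k} ∪
     {x : ℝ | ∃ (j : Fin K) (lj : Fin (L j)), j ≠ k ∧ (⟨j, lj⟩ : User L) ∈ S ∧
        x = r j lj + α j lj k})) := by
  have hfin : (insert (0 : ℝ)
      ((Set.range fun l' : Fin (L k) => r k (π k l') + α k (π k l') k) ∪
       (Set.range fun p : User L => r p.1 p.2 + α p.1 p.2 k))).Finite := by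
    apply Set.Finite.insert
    exact (Set.finite_range _).union (Set.finite_range _)
  apply BddAbove.mono _ hfin.bddAbove
  rintro x (rfl | (⟨l', _, _, rfl⟩ | ⟨j, lj, _, _, rfl⟩))
  · exact Set.mem_insert _ _
  · exact Set.mem_insert_of_mem _ (Or.inl ⟨l', rfl⟩)
  · exact Set.mem_insert_of_mem _ (Or.inr ⟨⟨j, lj⟩, rfl⟩)

lemma zero_le_innerMax {S : Set (User L)} : 0 ≤ innerMax L α π S r k l :=
  le_csSup IM_bddAbove (Set.mem_insert _ _)

lemma le_innerMax_same {l' : Fin (L k)} (h : l' < l) :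
    r k (π k l') + α k (π k l') k ≤ innerMax L α π Set.univ r k l :=
  le_csSup IM_bddAbove (Set.mem_insert_of_mem _ (Or.inl ⟨l', h, Set.mem_univ _, rfl⟩))

lemma le_innerMax_cross {j : Fin K} {lj : Fin (L j)} (hj : j ≠ k) :
    r j lj + α j lj k ≤ innerMax L α π Set.univ r k l :=
  le_csSup IM_bddAbove (Set.mem_insert_of_mem _ (Or.inr ⟨j, lj, hj, Set.mem_univ _, rfl⟩))

lemma innerMax_le {c : ℝ} (h0 : 0 ≤ c)
    (h1 : ∀ l' : Fin (L k), l' < l → r k (π k l') + α k (π k l') k ≤ c)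
    (h2 : ∀ (j : Fin K) (lj : Fin (L j)), j ≠ k → r j lj + α j lj k ≤ c) :
    innerMax L α π Set.univ r k l ≤ c := by
  apply Real.sSup_le _ h0
  rintro x (rfl | (⟨l', hl', _, rfl⟩ | ⟨j, lj, hj, _, rfl⟩))
  · exact h0
  · exact h1 l' hl'
  · exact h2 j lj hj

lemma cellBound {d : (k : Fin K) → Fin (L k) → ℝ} {C : ℝ}
    (hd : ∀ t : Fin (L k), d k (π k t) ≤
      max 0 (r k (π k t) + α k (π k t) k - innerMax L α π Set.univ r k t))
    (hC : ∀ t : Fin (L k), C ≤ innerMax L α π Set.univ r k t) :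
    ∀ T : Finset (Fin (L k)), ∀ bound : ℝ, C ≤ bound →
      (∀ s ∈ T, r k s + α k s k ≤ bound) → ∑ s ∈ T, d k s ≤ bound - C := by
  intro T
  induction T using Finset.strongInduction with
  | _ T ih =>
    intro bound hCb hb
    rcases T.eq_empty_or_nonempty with rfl | hne
    · simp; linarith
    obtain ⟨smax, hsmaxT, hsmax⟩ := T.exists_max_image (fun s => ((π k).symm s : ℕ)) hne
    set t := (π k).symm smax with ht
    have hπt : π k t = smax := Equiv.apply_symm_apply _ _
    set M := innerMax L α π Set.univ r k t with hM
    have hMg : ∀ s ∈ T.erase smax, r k s + α k s k ≤ M := by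
      intro s hs
      obtain ⟨hne', hsT⟩ := Finset.mem_erase.mp hs
      have hlt : (π k).symm s < t := by
        have hle := hsmax s hsT
        have hne2 : (π k).symm s ≠ t := fun h =>
          hne' (by rw [← hπt, ← h, Equiv.apply_symm_apply])
        rw [Fin.lt_def]
        rcases lt_or_eq_of_le hle with h | h
        · exact h
        · exact absurd (Fin.ext h) hne2
      have h2 := le_innerMax_same (α := α) (π := π) (r := r) (l := t) hlt
      rwa [Equiv.apply_symm_apply] at h2
    have hdmax : d k smax ≤ max 0 (r k smax + α k smax k - M) := by
      have h3 := hd t; rwa [hπt] at h3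
    rw [← Finset.add_sum_erase T _ hsmaxT]
    rcases (T.erase smax).eq_empty_or_nonempty with he | hne'
    · rw [he]
      simp only [Finset.sum_empty, add_zero]
      have hCM : C ≤ M := hC t
      have h4 : max 0 (r k smax + α k smax k - M) ≤ max 0 (r k smax + α k smax k - C) :=
        max_le_max le_rfl (by linarith)
      have h5 : max 0 (r k smax + α k smax k - C) ≤ bound - C :=
        max_le (by linarith) (by linarith [hb smax hsmaxT])
      linarith
    · set B : ℝ := max C ((T.erase smax).sup' hne' (fun s => r k s + α k s k)) with hB
      have hih : ∑ s ∈ T.erase smax, d k s ≤ B - C := by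
        apply ih (T.erase smax) (Finset.erase_ssubset hsmaxT) B (le_max_left _ _)
        intro s hs
        exact le_trans (Finset.le_sup' (fun s => r k s + α k s k) hs) (le_max_right _ _)
      have hBM : B ≤ M := max_le (hC t) (Finset.sup'_le _ _ hMg)
      have hdm2 : d k smax ≤ max 0 (r k smax + α k smax k - B) :=
        le_trans hdmax (max_le_max le_rfl (by linarith))
      have hkey : max 0 (r k smax + α k smax k - B) = max B (r k smax + α k smax k) - B := by
        rw [← max_sub_sub_right, sub_self]
      have hBb : B ≤ bound := max_le hCb (Finset.sup'_le _ _ fun s hs =>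
        hb s (Finset.mem_of_mem_erase hs))
      have hyb : r k smax + α k smax k ≤ bound := hb smax hsmaxT
      have : max B (r k smax + α k smax k) ≤ bound := max_le hBb hyb
      linarith [hdm2, hkey]

end IM

section PartII
variable {K : ℕ} {L : Fin K → ℕ} {α : (k : Fin K) → Fin (L k) → Fin K → ℝ}

lemma alphaDiffMono
    (hα : ∀ (k : Fin K) (l : Fin (L k)) (i : Fin K), 0 ≤ α k l i)
    (hO1 : ∀ (i j : Fin K), j ≠ i → ∀ (l' l : Fin (L i)), l' < l →
      α i l' i + min (α i l j) (2 * α i l j - α i l' j) ≤ α i l i)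
    (i p : Fin K) (hp : p ≠ i) (s t : Fin (L i)) (hst : s ≤ t) :
    α i s i - α i s p ≤ α i t i - α i t p := by
  rcases lt_or_eq_of_le hst with h | h
  · have h1 := hO1 i p hp s t h
    have h2 : α i t p - α i s p ≤ min (α i t p) (2 * α i t p - α i s p) :=
      le_min (by linarith [hα i s p]) (by linarith [hα i t p])
    linarith
  · rw [h]

theorem star_subset_cyclic (hK : 1 ≤ K) (hL : ∀ k, 1 ≤ L k)
    (hα : ∀ (k : Fin K) (l : Fin (L k)) (i : Fin K), 0 ≤ α k l i)
    (hmono : ∀ k : Fin K, Monotone (fun l : Fin (L k) => α k l k))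
    (hO1 : ∀ (i j : Fin K), j ≠ i → ∀ (l' l : Fin (L i)), l' < l →
      α i l' i + min (α i l j) (2 * α i l j - α i l' j) ≤ α i l i)
    (hO2 : ∀ (i : Fin K) (li : Fin (L i)) (j : Fin K), j ≠ i →
      ∀ (k : Fin K), k ≠ i → ∀ (lk : Fin (L k)),
      α i li j + α k lk i ≤ α i li i)
    (π : (k : Fin K) → Equiv.Perm (Fin (L k)))
    (d : (k : Fin K) → Fin (L k) → ℝ) (hstar : starTIN L α π d) :
    cyclicSystem L α (idOrder L) d := by
  classical
  obtain ⟨hpos, r, hr, hineq⟩ := hstar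
  -- MAC bounds
  have mac : ∀ (k : Fin K) (l : Fin (L k)), ∑ s ∈ Finset.Iic l, d k s ≤ α k l k := by
    intro k l
    have h := cellBound (C := 0) (fun t => hineq k t) (fun t => zero_le_innerMax)
      (Finset.Iic l) (α k l k) (hα k l k)
      (fun s hs => by
        have := hmono k (Finset.mem_Iic.mp hs)
        have hr1 := hr k s
        simp only at this
        linarith)
    linarith
  constructor
  · intro k l
    simpa [idOrder] using mac k l
  · intro m hm2 hmK c hcinj lsel
    simp only [idOrder, Equiv.refl_apply]
    -- maximizers
    have hmax : ∀ j : Fin m, ∃ s ∈ Finset.Iic (lsel j),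
        ∀ s' ∈ Finset.Iic (lsel j),
          r (c j) s' + α (c j) s' (c j) ≤ r (c j) s + α (c j) s (c j) := by
      intro j
      exact (Finset.Iic (lsel j)).exists_max_image _ ⟨lsel j, Finset.mem_Iic.mpr le_rfl⟩
    choose sStar hsmem hsmax using hmax
    set T : Fin m → ℝ := fun i => r (c i) (sStar i) + α (c i) (sStar i) (c (prevIdx i))
      with hT
    set Cc : Fin m → ℝ := fun j => max 0 (T (nextIdx j)) with hCc
    set Bv : Fin m → ℝ := fun j => r (c j) (sStar j) + α (c j) (sStar j) (c j) with hBv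
    set DX : Fin m → ℝ := fun j =>
      α (c j) (lsel j) (c j) - α (c j) (lsel j) (c (prevIdx j)) with hDX
    have hnextc : ∀ j : Fin m, c (nextIdx j) ≠ c j :=
      fun j h => nextIdx_ne hm2 j (hcinj h)
    have hprevc : ∀ j : Fin m, c (prevIdx j) ≠ c j :=
      fun j h => prevIdx_ne hm2 j (hcinj h)
    have hCvalid : ∀ (j : Fin m) (t : Fin (L (c j))),
        Cc j ≤ innerMax L α π Set.univ r (c j) t := by
      intro j t
      apply max_le zero_le_innerMax
      have he : T (nextIdx j) = r (c (nextIdx j)) (sStar (nextIdx j)) +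
          α (c (nextIdx j)) (sStar (nextIdx j)) (c j) := by
        rw [hT]; simp only [prevIdx_nextIdx]
      rw [he]
      exact le_innerMax_cross (hnextc j)
    have hPS : ∀ j : Fin m, ∑ s ∈ Finset.Iic (lsel j), d (c j) s ≤
        max (Cc j) (Bv j) - Cc j := by
      intro j
      apply cellBound (fun t => hineq (c j) t) (hCvalid j) (Finset.Iic (lsel j))
        (max (Cc j) (Bv j)) (le_max_left _ _)
      intro s hs
      exact le_trans (hsmax j s hs) (le_max_right _ _)
    set A : Finset (Fin m) := Finset.univ.filter (fun j => Cc j ≤ Bv j) with hA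
    have hstep1 : ∀ j : Fin m, max (Cc j) (Bv j) - Cc j =
        if j ∈ A then Bv j - Cc j else 0 := by
      intro j
      by_cases h : Cc j ≤ Bv j
      · rw [if_pos (by simp [hA, h]), max_eq_right h]
      · rw [if_neg (by simp [hA, h]), max_eq_left (le_of_not_ge h)]
        ring
    have hBT : ∀ j : Fin m, Bv j ≤ T j + DX j := by
      intro j
      have := alphaDiffMono hα hO1 (c j) (c (prevIdx j)) (hprevc j)
        (sStar j) (lsel j) (Finset.mem_Iic.mp (hsmem j))
      simp only [hBv, hT, hDX]
      linarith
    have hDXpos : ∀ j : Fin m, 0 ≤ DX j := by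
      intro j
      have h2 := hO2 (c j) (lsel j) (c (prevIdx j)) (hprevc j) (c (nextIdx j))
        (hnextc j) ⟨0, hL _⟩
      have h3 := hα (c (nextIdx j)) ⟨0, hL _⟩ (c j)
      simp only [hDX]
      linarith
    have hTDX : ∀ j : Fin m, T j ≤ DX (prevIdx j) := by
      intro j
      have h1 : c (prevIdx (prevIdx j)) ≠ c (prevIdx j) :=
        fun h => prevIdx_ne hm2 (prevIdx j) (hcinj h)
      have h2 : c j ≠ c (prevIdx j) := fun h => (hprevc j) h.symm
      have h3 := hO2 (c (prevIdx j)) (lsel (prevIdx j)) (c (prevIdx (prevIdx j))) h1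
        (c j) h2 (sStar j)
      have h4 := hr (c j) (sStar j)
      simp only [hT, hDX]
      linarith
    -- summation bookkeeping
    calc ∑ j, ∑ s ∈ Finset.Iic (lsel j), d (c j) s
        ≤ ∑ j, (if j ∈ A then Bv j - Cc j else 0) := by
          apply Finset.sum_le_sum
          intro j _
          rw [← hstep1 j]; exact hPS j
      _ = ∑ j ∈ A, (Bv j - Cc j) := by
          rw [Finset.sum_ite_mem, Finset.univ_inter]
      _ ≤ ∑ j ∈ A, (DX j + (T j - Cc j)) := by
          apply Finset.sum_le_sum
          intro j _
          have := hBT j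
          linarith
      _ = ∑ j ∈ A, DX j + ∑ j ∈ A, (T j - Cc j) := Finset.sum_add_distrib
      _ ≤ ∑ j ∈ A, DX j + ∑ j ∈ Finset.univ.filter (fun j => ¬ (Cc j ≤ Bv j)), DX j := by
          gcongr ∑ j ∈ A, DX j + ?_
          -- the key combinatorial estimate
          calc ∑ j ∈ A, (T j - Cc j)
              ≤ ∑ j ∈ A, (T j - if nextIdx j ∈ A then T (nextIdx j) else 0) := by
                apply Finset.sum_le_sum
                intro j _
                have : (if nextIdx j ∈ A then T (nextIdx j) else 0) ≤ Cc j := by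
                  split_ifs
                  · exact le_max_right _ _
                  · exact le_max_left _ _
                linarith
            _ = ∑ j ∈ A, T j - ∑ j ∈ A.filter (fun j => nextIdx j ∈ A), T (nextIdx j) := by
                rw [Finset.sum_sub_distrib]
                congr 1
                exact (Finset.sum_filter _ _).symm
            _ = ∑ j ∈ A, T j - ∑ j ∈ A.filter (fun j => prevIdx j ∈ A), T j := by
                congr 1
                apply Finset.sum_nbij' (fun j => nextIdx j) (fun j => prevIdx j)
                · intro j hj
                  simp only [Finset.mem_filter] at hj ⊢
                  exact ⟨hj.2, by rw [prevIdx_nextIdx]; exact hj.1⟩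
                · intro j hj
                  simp only [Finset.mem_filter] at hj ⊢
                  exact ⟨hj.2, by rw [nextIdx_prevIdx]; exact hj.1⟩
                · intro j _; rw [prevIdx_nextIdx]
                · intro j _; rw [nextIdx_prevIdx]
                · intro j _; rfl
            _ = ∑ j ∈ A.filter (fun j => prevIdx j ∉ A), T j := by
                rw [← Finset.sum_filter_add_sum_filter_not A (fun j => prevIdx j ∈ A) T]
                ring
            _ ≤ ∑ j ∈ A.filter (fun j => prevIdx j ∉ A), DX (prevIdx j) :=
                Finset.sum_le_sum (fun j _ => hTDX j)
            _ = ∑ i ∈ (A.filter (fun j => prevIdx j ∉ A)).image prevIdx, DX i := by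
                rw [Finset.sum_image (fun a _ b _ h => prevIdx_injective h)]
            _ ≤ ∑ j ∈ Finset.univ.filter (fun j => ¬ (Cc j ≤ Bv j)), DX j := by
                apply Finset.sum_le_sum_of_subset_of_nonneg
                · intro i hi
                  simp only [Finset.mem_image, Finset.mem_filter] at hi ⊢
                  obtain ⟨j, ⟨_, hj2⟩, rfl⟩ := hi
                  refine ⟨Finset.mem_univ _, ?_⟩
                  intro hcon
                  exact hj2 (by simp [hA, hcon])
                · intro i _ _
                  exact hDXpos i
      _ = ∑ j, DX j := by
          rw [hA]
          exact Finset.sum_filter_add_sum_filter_not _ _ _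
      _ = ∑ j, (α (c j) (lsel j) (c j) - α (c j) (lsel j) (c (prevIdx j))) := rfl

end PartII

section FinIdx2

lemma nextIdx_castSucc {p : ℕ} (i : Fin p) : nextIdx (i.castSucc : Fin (p+1)) = i.succ := by
  apply Fin.ext
  rw [nextIdx_val]
  have := i.isLt
  simp only [Fin.coe_castSucc, Fin.val_succ]
  split_ifs <;> omega

lemma nextIdx_last {p : ℕ} : nextIdx (Fin.last p) = (0 : Fin (p+1)) := by
  apply Fin.ext
  rw [nextIdx_val]
  simp

lemma snoc_injective {n : ℕ} {β : Sort*} {f : Fin n → β} {b : β}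
    (hf : Function.Injective f) (hb : ∀ i, f i ≠ b) :
    Function.Injective (Fin.snoc f b : Fin (n+1) → β) := by
  intro a a' h
  induction a using Fin.lastCases with
  | last =>
    induction a' using Fin.lastCases with
    | last => rfl
    | cast a' =>
      rw [Fin.snoc_last, Fin.snoc_castSucc] at h
      exact absurd h.symm (hb a')
  | cast a =>
    induction a' using Fin.lastCases with
    | last =>
      rw [Fin.snoc_last, Fin.snoc_castSucc] at h
      exact absurd h (hb a)
    | cast a' =>
      rw [Fin.snoc_castSucc, Fin.snoc_castSucc] at h
      rw [hf h]

end FinIdx2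

section PartIII
variable {K : ℕ}

theorem cyclic_subset_poly (hK : 1 ≤ K) {L : Fin K → ℕ} (hL : ∀ k, 1 ≤ L k)
    {α : (k : Fin K) → Fin (L k) → Fin K → ℝ}
    (hα : ∀ (k : Fin K) (l : Fin (L k)) (i : Fin K), 0 ≤ α k l i)
    {d : (k : Fin K) → Fin (L k) → ℝ}
    (hpos : ∀ (k : Fin K) (l : Fin (L k)), 0 ≤ d k l)
    (hcyc : cyclicSystem L α (idOrder L) d) :
    polyTIN L α (idOrder L) Set.univ d := by
  classical
  obtain ⟨hmac0, hcyc0⟩ := hcyc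
  simp only [idOrder, Equiv.refl_apply] at hmac0 hcyc0
  set Sd : (k : Fin K) → Fin (L k) → ℝ := fun k l => ∑ s ∈ Finset.Iic l, d k s with hSd
  have hmac : ∀ (k : Fin K) (l : Fin (L k)), Sd k l ≤ α k l k := hmac0
  -- cyclic inequalities in the "next" orientation
  have hcycN : ∀ m : ℕ, 2 ≤ m → m ≤ K → ∀ c : Fin m → Fin K, Function.Injective c →
      ∀ lsel : (j : Fin m) → Fin (L (c j)),
      ∑ j, Sd (c j) (lsel j) ≤
        ∑ j, (α (c j) (lsel j) (c j) - α (c j) (lsel j) (c (nextIdx j))) := by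
    intro m hm2 hmK c hcinj lsel
    have h := hcyc0 m hm2 hmK (fun j => c j.rev)
      (fun a b hab => Fin.rev_injective (hcinj hab)) (fun j => lsel j.rev)
    calc ∑ j, Sd (c j) (lsel j)
        = ∑ j : Fin m, Sd (c j.rev) (lsel j.rev) :=
          (Fintype.sum_bijective Fin.rev Fin.rev_bijective _ _ (fun j => rfl)).symm
      _ ≤ ∑ j : Fin m, (α (c j.rev) (lsel j.rev) (c j.rev) -
            α (c j.rev) (lsel j.rev) (c (prevIdx j).rev)) := h
      _ = ∑ j : Fin m, (α (c j.rev) (lsel j.rev) (c j.rev) -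
            α (c j.rev) (lsel j.rev) (c (nextIdx j.rev))) := by
          apply Finset.sum_congr rfl
          intro j _
          rw [rev_prevIdx]
      _ = ∑ j, (α (c j) (lsel j) (c j) - α (c j) (lsel j) (c (nextIdx j))) :=
          Fintype.sum_bijective Fin.rev Fin.rev_bijective _ _ (fun j => rfl)
  -- the edge weights
  set w : Fin K → Fin K → ℝ := fun q i =>
    Finset.univ.sup' ⟨⟨0, hL q⟩, Finset.mem_univ _⟩
      (fun l => Sd q l - α q l q + α q l i) with hwdef
  have hw_le : ∀ (q i : Fin K) (l : Fin (L q)), Sd q l - α q l q + α q l i ≤ w q i := by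
    intro q i l
    simp only [hwdef]
    exact Finset.le_sup' (fun l => Sd q l - α q l q + α q l i) (Finset.mem_univ l)
  have hw_ex : ∀ q i : Fin K, ∃ l : Fin (L q), w q i = Sd q l - α q l q + α q l i := by
    intro q i
    obtain ⟨l, -, hl⟩ := Finset.exists_mem_eq_sup' ⟨⟨0, hL q⟩, Finset.mem_univ _⟩
      (fun l => Sd q l - α q l q + α q l i)
    exact ⟨l, hl⟩
  -- no positive cycles
  have negcyc : ∀ (p : ℕ) (cc : Fin (p+1) → Fin K), 1 ≤ p → Function.Injective cc →
      (∑ i : Fin p, w (cc i.castSucc) (cc i.succ)) + w (cc (Fin.last p)) (cc 0) ≤ 0 := by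
    intro p cc hp hinj
    have hcard : p + 1 ≤ K := by simpa using Fintype.card_le_of_injective cc hinj
    choose u hu using fun j : Fin (p+1) => hw_ex (cc j) (cc (nextIdx j))
    have h := hcycN (p+1) (by omega) hcard cc hinj u
    have hsum : ∑ j : Fin (p+1), w (cc j) (cc (nextIdx j)) ≤ 0 := by
      have he : ∀ j : Fin (p+1), w (cc j) (cc (nextIdx j)) =
          Sd (cc j) (u j) - (α (cc j) (u j) (cc j) - α (cc j) (u j) (cc (nextIdx j))) := by
        intro j; rw [hu j]; ring
      rw [Finset.sum_congr rfl (fun j _ => he j), Finset.sum_sub_distrib]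
      linarith
    calc (∑ i : Fin p, w (cc i.castSucc) (cc i.succ)) + w (cc (Fin.last p)) (cc 0)
        = ∑ j : Fin (p+1), w (cc j) (cc (nextIdx j)) := by
          rw [Fin.sum_univ_castSucc]
          congr 1
          · exact Finset.sum_congr rfl (fun i _ => by rw [nextIdx_castSucc])
          · rw [nextIdx_last]
      _ ≤ 0 := hsum
  -- bound along any path into a cell
  have keypath : ∀ (md : ℕ) (cc : Fin (md+1) → Fin K), Function.Injective cc →
      ∀ l : Fin (L (cc (Fin.last md))),
      Sd (cc (Fin.last md)) l + (∑ i : Fin md, w (cc i.castSucc) (cc i.succ)) ≤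
        α (cc (Fin.last md)) l (cc (Fin.last md)) := by
    intro md cc hinj l
    rcases Nat.eq_zero_or_pos md with rfl | hp
    · simpa using hmac _ l
    · have h1 := negcyc md cc hp hinj
      have h2 := hw_le (cc (Fin.last md)) (cc 0) l
      have h3 := hα (cc (Fin.last md)) l (cc 0)
      linarith
  -- the potential
  set PSet : Fin K → Set ℝ := fun k =>
    {x | ∃ (md : ℕ) (cc : Fin (md+1) → Fin K), Function.Injective cc ∧
      cc (Fin.last md) = k ∧ x = ∑ i : Fin md, w (cc i.castSucc) (cc i.succ)} with hPSet
  set I : Fin K → ℝ := fun k => sSup (PSet k) with hIdef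
  have hPSbdd : ∀ k, BddAbove (PSet k) := by
    intro k
    have hfin : (⋃ md : Fin K, Set.range
        (fun cc : Fin (md.val+1) → Fin K =>
          ∑ i : Fin md.val, w (cc i.castSucc) (cc i.succ))).Finite :=
      Set.finite_iUnion (fun md => Set.finite_range _)
    apply BddAbove.mono _ hfin.bddAbove
    rintro x ⟨md, cc, hinj, -, rfl⟩
    have hcard : md + 1 ≤ K := by simpa using Fintype.card_le_of_injective cc hinj
    exact Set.mem_iUnion.mpr ⟨⟨md, by omega⟩, ⟨cc, rfl⟩⟩
  have hzero_mem : ∀ k, (0:ℝ) ∈ PSet k := by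
    intro k
    refine ⟨0, fun _ => k, fun a b _ => Fin.ext (by omega), rfl, ?_⟩
    rw [Finset.univ_eq_empty, Finset.sum_empty]
  have hI0 : ∀ k, 0 ≤ I k := fun k => le_csSup (hPSbdd k) (hzero_mem k)
  have hIub : ∀ (k : Fin K) (l : Fin (L k)), Sd k l + I k ≤ α k l k := by
    intro k l
    have h : I k ≤ α k l k - Sd k l := by
      apply Real.sSup_le _ (by linarith [hmac k l])
      rintro x ⟨md, cc, hinj, hend, rfl⟩
      subst hend
      linarith [keypath md cc hinj l]
    linarith
  have hwk_mem : ∀ q k : Fin K, q ≠ k → w q k ∈ PSet k := by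
    intro q k hqk
    refine ⟨1, fun i => if i = 0 then q else k, ?_, ?_, ?_⟩
    · intro a b hab
      dsimp only at hab
      by_cases h1 : a = 0 <;> by_cases h2 : b = 0
      · rw [h1, h2]
      · rw [if_pos h1, if_neg h2] at hab; exact absurd hab hqk
      · rw [if_neg h1, if_pos h2] at hab; exact absurd hab.symm hqk
      · have h1' : a.val ≠ 0 := fun hc => h1 (Fin.ext hc)
        have h2' : b.val ≠ 0 := fun hc => h2 (Fin.ext hc)
        have ha := a.isLt
        have hb := b.isLt
        apply Fin.ext
        omega
    · dsimp only
      rw [if_neg (by decide : ¬ (Fin.last 1 = 0))]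
    · rw [Fin.sum_univ_one]
      dsimp only
      rw [
        if_pos (by decide : ((0 : Fin 1).castSucc = 0)),
        if_neg (by decide : ¬ ((0 : Fin 1).succ = 0))]
  have hIw : ∀ q k : Fin K, q ≠ k → I q + w q k ≤ I k := by
    intro q k hqk
    have h0 : 0 ≤ I k - w q k := by
      have := le_csSup (hPSbdd k) (hwk_mem q k hqk)
      linarith
    have hmain : I q ≤ I k - w q k := by
      apply Real.sSup_le _ h0
      rintro x ⟨md, cc, hinj, hend, rfl⟩
      by_cases hk : ∃ t, cc t = k
      · -- truncation: k already on the path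
        obtain ⟨t, ht⟩ := hk
        have htne : t ≠ Fin.last md := by
          intro hcon; rw [hcon, hend] at ht; exact hqk ht
        have htlt : t.val < md := by
          have h1 := t.isLt
          have h2 : t.val ≠ md := fun hcon => htne (Fin.ext (by simpa using hcon))
          omega
        set p := md - t.val with hp
        have hp1 : 1 ≤ p := by omega
        set G : ℕ → ℝ := fun n =>
          if h : n + 1 ≤ md then w (cc ⟨n, by omega⟩) (cc ⟨n+1, by omega⟩) else 0 with hG
        have hGofFin : ∀ (a b : ℕ) (ha : a < md + 1) (hb : b < md + 1), b = a + 1 →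
            w (cc ⟨a, ha⟩) (cc ⟨b, hb⟩) = G a := by
          intro a b ha hb hab
          simp only [hG]
          rw [dif_pos (by omega : a + 1 ≤ md)]
          congr 1
          all_goals first
            | rfl
            | exact congrArg cc (Fin.ext hab)
        have hxG : (∑ i : Fin md, w (cc i.castSucc) (cc i.succ)) = ∑ n ∈ Finset.range md, G n := by
          rw [← Fin.sum_univ_eq_sum_range G md]
          apply Finset.sum_congr rfl
          intro i _
          exact hGofFin i.val (i.val+1) (by omega) (by omega) rfl
        set cpre : Fin (t.val + 1) → Fin K :=
          fun i => cc (Fin.castLE (by omega) i) with hcpre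
        have hcpre_inj : Function.Injective cpre := by
          intro a b hab2
          exact Fin.castLE_injective _ (hinj hab2)
        have hcpre_end : cpre (Fin.last t.val) = k := by
          have h5 : (Fin.castLE (by omega : t.val + 1 ≤ md + 1) (Fin.last t.val)) = t :=
            Fin.ext rfl
          calc cpre (Fin.last t.val) = cc t := by rw [hcpre]; exact congrArg cc h5
            _ = k := ht
        have hpre_le := le_csSup (hPSbdd k)
          (⟨t.val, cpre, hcpre_inj, hcpre_end, rfl⟩ :
            (∑ i : Fin t.val, w (cpre i.castSucc) (cpre i.succ)) ∈ PSet k)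
        have hpreG : (∑ i : Fin t.val, w (cpre i.castSucc) (cpre i.succ)) =
            ∑ n ∈ Finset.range t.val, G n := by
          rw [← Fin.sum_univ_eq_sum_range G t.val]
          apply Finset.sum_congr rfl
          intro i _
          exact hGofFin i.val (i.val+1) (by omega) (by omega) rfl
        set csuf : Fin (p + 1) → Fin K :=
          fun i => cc ⟨t.val + i.val, by have := i.isLt; have := t.isLt; omega⟩ with hcsuf
        have hcsuf_inj : Function.Injective csuf := by
          intro a b hab2
          have h3 := hinj hab2
          have h4 := congrArg Fin.val h3
          simp only at h4
          exact Fin.ext (by omega)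
        have hsuf := negcyc p csuf hp1 hcsuf_inj
        have hcsuf0 : csuf 0 = k := by
          have h5 : (⟨t.val + ((0 : Fin (p+1)).val),
              by have := t.isLt; omega⟩ : Fin (md+1)) = t := Fin.ext (by simp)
          calc csuf 0 = cc t := by rw [hcsuf]; exact congrArg cc h5
            _ = k := ht
        have hcsuflast : csuf (Fin.last p) = q := by
          have h5 : (⟨t.val + ((Fin.last p).val),
              by have := t.isLt; omega⟩ : Fin (md+1)) = Fin.last md :=
            Fin.ext (by simp only [Fin.val_last]; omega)
          calc csuf (Fin.last p) = cc (Fin.last md) := by rw [hcsuf]; exact congrArg cc h5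
            _ = q := hend
        have hsufG : (∑ i : Fin p, w (csuf i.castSucc) (csuf i.succ)) =
            ∑ n ∈ Finset.range p, G (t.val + n) := by
          rw [← Fin.sum_univ_eq_sum_range (fun n => G (t.val + n)) p]
          apply Finset.sum_congr rfl
          intro i _
          exact hGofFin (t.val + i.val) (t.val + (i.val + 1)) (by omega) (by omega) (by omega)
        have hsplit2 : ∑ n ∈ Finset.range md, G n =
            (∑ n ∈ Finset.range t.val, G n) + ∑ n ∈ Finset.range p, G (t.val + n) := by
          calc ∑ n ∈ Finset.range md, G n
              = ∑ n ∈ Finset.Ico 0 md, G n := by rw [Finset.range_eq_Ico]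
            _ = (∑ n ∈ Finset.Ico 0 t.val, G n) + ∑ n ∈ Finset.Ico t.val md, G n :=
                (Finset.sum_Ico_consecutive G (Nat.zero_le t.val) (le_of_lt htlt)).symm
            _ = (∑ n ∈ Finset.range t.val, G n) + ∑ n ∈ Finset.range p, G (t.val + n) := by
                rw [← Finset.range_eq_Ico, Finset.sum_Ico_eq_sum_range, ← hp]
        rw [hxG, hsplit2]
        rw [hpreG] at hpre_le
        rw [hsufG, hcsuf0, hcsuflast] at hsuf
        linarith
      · -- extension: append k to the path
        push_neg at hk
        have hinj' : Function.Injective (Fin.snoc cc k : Fin (md+2) → Fin K) :=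
          snoc_injective hinj hk
        have hmem : (∑ i : Fin (md+1), w ((Fin.snoc cc k : Fin (md+2) → Fin K) i.castSucc)
            ((Fin.snoc cc k : Fin (md+2) → Fin K) i.succ)) ∈ PSet k :=
          ⟨md+1, _, hinj', Fin.snoc_last _ _, rfl⟩
        have hle := le_csSup (hPSbdd k) hmem
        have heq : (∑ i : Fin (md+1), w ((Fin.snoc cc k : Fin (md+2) → Fin K) i.castSucc)
            ((Fin.snoc cc k : Fin (md+2) → Fin K) i.succ)) =
            (∑ i : Fin md, w (cc i.castSucc) (cc i.succ)) + w (cc (Fin.last md)) k := by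
          rw [Fin.sum_univ_castSucc]
          congr 1
          · apply Finset.sum_congr rfl
            intro i _
            congr 1
            · exact Fin.snoc_castSucc _ _ _
            · rw [Fin.succ_castSucc]
              exact Fin.snoc_castSucc _ _ _
          · congr 1
            · exact Fin.snoc_castSucc _ _ _
            · rw [Fin.succ_last]
              exact Fin.snoc_last _ _
        rw [heq, hend] at hle
        linarith
    linarith
  -- assemble the polyhedral certificate
  refine ⟨hpos, fun k l h => absurd (Set.mem_univ _) h,
    fun k l => Sd k l - α k l k + I k, fun k l _ => by dsimp only; linarith [hIub k l], ?_⟩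
  intro k l _
  simp only [idOrder, Equiv.refl_apply]
  have hsplit : Sd k l = d k l + ∑ s ∈ Finset.Iio l, d k s := by
    rw [hSd]
    simp only
    rw [← Finset.Iio_insert, Finset.sum_insert (by simp)]
  have hIM : innerMax L α (idOrder L) Set.univ
      (fun k l => Sd k l - α k l k + I k) k l ≤ (∑ s ∈ Finset.Iio l, d k s) + I k := by
    apply innerMax_le
    · exact add_nonneg (Finset.sum_nonneg fun s _ => hpos k s) (hI0 k)
    · intro l' hl'
      simp only [idOrder, Equiv.refl_apply]
      have hsub : Sd k l' ≤ ∑ s ∈ Finset.Iio l, d k s := by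
        apply Finset.sum_le_sum_of_subset_of_nonneg
        · intro s hs
          exact Finset.mem_Iio.mpr (lt_of_le_of_lt (Finset.mem_Iic.mp hs) hl')
        · intro s _ _; exact hpos k s
      linarith
    · intro q lq hq
      have h1 := hw_le q k lq
      have h2 := hIw q k hq
      have h3 : (0:ℝ) ≤ ∑ s ∈ Finset.Iio l, d k s := Finset.sum_nonneg fun s _ => hpos k s
      linarith
  linarith
end PartIII

/-- The easy inclusion `P_id(𝒦) ⊆ P*_id`. -/
lemma poly_subset_star {K : ℕ} {L : Fin K → ℕ}
    {α : (k : Fin K) → Fin (L k) → Fin K → ℝ} {d : (k : Fin K) → Fin (L k) → ℝ}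
    (h : polyTIN L α (idOrder L) Set.univ d) : starTIN L α (idOrder L) d := by
  obtain ⟨h1, _, r, hr, hineq⟩ := h
  exact ⟨h1, r, fun k l => hr k l (Set.mem_univ _),
    fun k l => le_trans (hineq k l (Set.mem_univ _)) (le_max_right _ _)⟩
/-- **Theorem 4 (achievable-region identity under TIN-optimality conditions).**
Under the TIN-optimality conditions (O1) and (O2), the general TIN-achievable GDoF region
`P* = ∪_π P*_π` equals the polyhedron `P_id(𝒦)` achieved with the identity decoding
order, which is the set of all nonnegative tuples satisfying the TIN cyclic system for
the identity decoding order. -/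
theorem starTIN_eq_polyTIN_id_of_optimalityConditions {K : ℕ} (hK : 1 ≤ K)
    (L : Fin K → ℕ) (hL : ∀ k, 1 ≤ L k)
    (α : (k : Fin K) → Fin (L k) → Fin K → ℝ)
    (hα : ∀ (k : Fin K) (l : Fin (L k)) (i : Fin K), 0 ≤ α k l i)
    (hmono : ∀ k : Fin K, Monotone (fun l : Fin (L k) => α k l k))
    (hO1 : ∀ (i j : Fin K), j ≠ i → ∀ (l' l : Fin (L i)), l' < l →
      α i l' i + min (α i l j) (2 * α i l j - α i l' j) ≤ α i l i)
    (hO2 : ∀ (i : Fin K) (li : Fin (L i)) (j : Fin K), j ≠ i →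
      ∀ (k : Fin K), k ≠ i → ∀ (lk : Fin (L k)),
      α i li j + α k lk i ≤ α i li i) :
    ({d : (k : Fin K) → Fin (L k) → ℝ |
        ∃ π : (k : Fin K) → Equiv.Perm (Fin (L k)), starTIN L α π d} =
      {d : (k : Fin K) → Fin (L k) → ℝ | polyTIN L α (idOrder L) Set.univ d}) ∧
    ({d : (k : Fin K) → Fin (L k) → ℝ | polyTIN L α (idOrder L) Set.univ d} =
      {d : (k : Fin K) → Fin (L k) → ℝ |
        (∀ (k : Fin K) (l : Fin (L k)), 0 ≤ d k l) ∧
          cyclicSystem L α (idOrder L) d}) := by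

  constructor
  · apply Set.eq_of_subset_of_subset
    · rintro dd ⟨π, hstar⟩
      exact cyclic_subset_poly hK hL hα hstar.1
        (star_subset_cyclic hK hL hα hmono hO1 hO2 π dd hstar)
    · intro dd hpoly
      exact ⟨idOrder L, poly_subset_star hpoly⟩
  · apply Set.eq_of_subset_of_subset
    · intro dd hpoly
      exact ⟨hpoly.1, star_subset_cyclic hK hL hα hmono hO1 hO2 (idOrder L) dd
        (poly_subset_star hpoly)⟩
    · rintro dd ⟨hpos, hcyc⟩
      exact cyclic_subset_poly hK hL hα hpos hcyc
end
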